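/- Let a, b be natural numbers and n = a + b. Let x be a symmetric n×n complex matrix, written in block form x = [[x₁₁, x₁₂],[x₂₁, x₂₂]] with x₁₁ of size a×a and x₂₂ of size b×b, and suppose the block x₂₂ is invertible. Then every symmetric n×n complex matrix C can be written as C = Y·x + x·Yᵀ + D for some n×n complex matrix Y and some symmetric matrix D whose bottom-right b×b block is zero. (This is the transversality of the section U ↦ B|_U to the rank stratification of symmetric matrices, in the case of a symmetric form B.) -/

import Mathlib

open Matrix

/-- Let `x` be a symmetric `(a+b)×(a+b)` complex matrix whose
bottom-right `b×b` block is invertible. Then every symmetric matrix `C` can be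
written as `C = Y·x + x·Yᵀ + D` with `D` symmetric and having zero bottom-right
`b×b` block. (Indices are modelled by `Fin a ⊕ Fin b`, so the bottom-right block
is `Matrix.toBlocks₂₂`.) -/
theorem transversality_symmetric (a b : ℕ)
    (x : Matrix (Fin a ⊕ Fin b) (Fin a ⊕ Fin b) ℂ)
    (hx : xᵀ = x) (hx22 : IsUnit (Matrix.toBlocks₂₂ x)) :
    ∀ C : Matrix (Fin a ⊕ Fin b) (Fin a ⊕ Fin b) ℂ, Cᵀ = C →
      ∃ Y D : Matrix (Fin a ⊕ Fin b) (Fin a ⊕ Fin b) ℂ,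
        Dᵀ = D ∧ Matrix.toBlocks₂₂ D = 0 ∧ C = Y * x + x * Yᵀ + D := by
  intro C hC
  set A := Matrix.toBlocks₂₂ x with hA
  have hdet : IsUnit A.det := (Matrix.isUnit_iff_isUnit_det A).mp hx22
  have hAsym : Aᵀ = A := by
    ext i j
    have := congrFun (congrFun hx (Sum.inr i)) (Sum.inr j)
    simpa [hA, Matrix.toBlocks₂₂, Matrix.transpose_apply] using this
  have hCsym : (Matrix.toBlocks₂₂ C)ᵀ = Matrix.toBlocks₂₂ C := by
    ext i j
    have := congrFun (congrFun hC (Sum.inr i)) (Sum.inr j)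
    simpa [Matrix.toBlocks₂₂, Matrix.transpose_apply] using this
  set Z : Matrix (Fin b) (Fin b) ℂ := (2:ℂ)⁻¹ • (Matrix.toBlocks₂₂ C * A⁻¹) with hZ
  set Y : Matrix (Fin a ⊕ Fin b) (Fin a ⊕ Fin b) ℂ := Matrix.fromBlocks 0 0 0 Z with hY
  refine ⟨Y, C - (Y * x + x * Yᵀ), ?_, ?_, by abel⟩
  · rw [Matrix.transpose_sub, Matrix.transpose_add, Matrix.transpose_mul,
      Matrix.transpose_mul, Matrix.transpose_transpose, hx, hC]
    abel
  · have hxblocks : x = Matrix.fromBlocks (Matrix.toBlocks₁₁ x) (Matrix.toBlocks₁₂ x)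
        (Matrix.toBlocks₂₁ x) A := (Matrix.fromBlocks_toBlocks x).symm
    have h1 : Matrix.toBlocks₂₂ (Y * x) = Z * A := by
      rw [hY]; conv_lhs => rw [hxblocks]
      rw [Matrix.fromBlocks_multiply, Matrix.toBlocks_fromBlocks₂₂]
      simp
    have h2 : Matrix.toBlocks₂₂ (x * Yᵀ) = A * Zᵀ := by
      rw [hY, Matrix.fromBlocks_transpose]; conv_lhs => rw [hxblocks]
      rw [Matrix.fromBlocks_multiply, Matrix.toBlocks_fromBlocks₂₂]
      simp
    have hZA : Z * A = (2:ℂ)⁻¹ • Matrix.toBlocks₂₂ C := by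
      rw [hZ, Matrix.smul_mul, Matrix.mul_assoc, Matrix.nonsing_inv_mul A hdet, Matrix.mul_one]
    have hAZ : A * Zᵀ = (2:ℂ)⁻¹ • Matrix.toBlocks₂₂ C := by
      rw [hZ, Matrix.transpose_smul, Matrix.transpose_mul, Matrix.transpose_nonsing_inv,
        hAsym, hCsym, Matrix.mul_smul, ← Matrix.mul_assoc,
        Matrix.mul_nonsing_inv A hdet, Matrix.one_mul]
    have hadd : ∀ (M N : Matrix (Fin a ⊕ Fin b) (Fin a ⊕ Fin b) ℂ),
        Matrix.toBlocks₂₂ (M - N) = Matrix.toBlocks₂₂ M - Matrix.toBlocks₂₂ N := by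
      intro M N; ext i j; simp [Matrix.toBlocks₂₂]
    have hadd' : ∀ (M N : Matrix (Fin a ⊕ Fin b) (Fin a ⊕ Fin b) ℂ),
        Matrix.toBlocks₂₂ (M + N) = Matrix.toBlocks₂₂ M + Matrix.toBlocks₂₂ N := by
      intro M N; ext i j; simp [Matrix.toBlocks₂₂]
    rw [hadd, hadd', h1, h2, hZA, hAZ, ← two_smul ℂ, smul_smul]
    norm_num
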